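/- Let Q : ℕ³ → ℕ be a total computable function such that μ(Q(n,k,s)) = n for all n, k, s, and let r > 1. Then there exists a computable coloring c : ℕ → ZMod r such that for every positive integer w and every n < λ(w), c(w + Q(n, λ(w), μ(w))) = c(w) + 1 in ZMod r. -/

import Mathlib

/-- `mu x = ⌊log₂ x⌋`, the exponent of the highest power of 2 in the binary expansion of `x`. -/
def mu (x : ℕ) : ℕ := Nat.log 2 x

/-- `lam x` is the 2-adic valuation of `x`, the exponent of the lowest power of 2
in the binary expansion of `x`. -/
def lam (x : ℕ) : ℕ := padicValNat 2 x

/-- `Bset n = B^n = {x ∈ ℤ⁺ : μ(x) = n}`. -/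
def Bset (n : ℕ) : Set ℕ := {x | 0 < x ∧ mu x = n}

/-- A set `A ⊆ ℤ⁺` has weak apartness if every `A ∩ B^m` has at most one element and
for every `l` there are at most two elements `x ∈ A` with `λ(x) = l`. -/
def WeakApart (A : Set ℕ) : Prop :=
  (∀ m, (A ∩ Bset m).Subsingleton) ∧
  (∀ l, ∀ x ∈ A, ∀ y ∈ A, ∀ z ∈ A,
    lam x = l → lam y = l → lam z = l → x = y ∨ x = z ∨ y = z)

/-- `FS A`: all finite sums of distinct elements of `A`. -/
def FS (A : Set ℕ) : Set ℕ :=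
  {n | ∃ F : Finset ℕ, ↑F ⊆ A ∧ F.Nonempty ∧ F.sum id = n}

/-- `FSle k A = FS^{≤k}(A)`: sums of at most `k` distinct elements of `A`. -/
def FSle (k : ℕ) (A : Set ℕ) : Set ℕ :=
  {n | ∃ F : Finset ℕ, ↑F ⊆ A ∧ F.Nonempty ∧ F.card ≤ k ∧ F.sum id = n}

/-- `A` is `Π⁰₃`: `x ∈ A ↔ ∀ y ∃ z ∀ w, R x y z w` for a computable relation `R`. -/
def Pi03 (A : Set ℕ) : Prop :=
  ∃ R : ℕ → ℕ → ℕ → ℕ → Bool,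
    Computable (fun p : ℕ × ℕ × ℕ × ℕ => R p.1 p.2.1 p.2.2.1 p.2.2.2) ∧
    ∀ x, x ∈ A ↔ ∀ y, ∃ z, ∀ w, R x y z w = true

/-- `A` is `Σ⁰₃`: `x ∈ A ↔ ∃ y ∀ z ∃ w, R x y z w` for a computable relation `R`. -/
def Sigma03 (A : Set ℕ) : Prop :=
  ∃ R : ℕ → ℕ → ℕ → ℕ → Bool,
    Computable (fun p : ℕ × ℕ × ℕ × ℕ => R p.1 p.2.1 p.2.2.1 p.2.2.2) ∧
    ∀ x, x ∈ A ↔ ∃ y, ∀ z, ∃ w, R x y z w = true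

/-- `A` is `Δ⁰₃` iff it is both `Σ⁰₃` and `Π⁰₃`. -/
def Delta03 (A : Set ℕ) : Prop := Sigma03 A ∧ Pi03 A

section Stmt8Aux

variable (r : ℕ) (Q : ℕ → ℕ → ℕ → ℕ)

def QOK : Prop := ∀ n k s, 0 < Q n k s ∧ mu (Q n k s) = n

theorem QOK.pos {Q} (h : QOK Q) (n k s : ℕ) : 0 < Q n k s := (h n k s).1
theorem QOK.mu {Q} (h : QOK Q) (n k s : ℕ) : mu (Q n k s) = n := (h n k s).2
theorem QOK.lt {Q} (h : QOK Q) (n k s : ℕ) : Q n k s < 2 ^ (n + 1) := by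
  have h1 : Q n k s < 2 ^ (Nat.log 2 (Q n k s) + 1) :=
    Nat.lt_pow_succ_log_self (by norm_num) _
  have h2 : Nat.log 2 (Q n k s) = n := (h n k s).2
  rwa [h2] at h1
theorem QOK.le {Q} (h : QOK Q) (n k s : ℕ) : 2 ^ n ≤ Q n k s := by
  have h2 : Nat.log 2 (Q n k s) = n := (h n k s).2
  have h3 := Nat.pow_log_le_self 2 (h n k s).1.ne'
  rwa [h2] at h3

theorem pow_mu_le {x : ℕ} (hx : x ≠ 0) : 2 ^ mu x ≤ x := Nat.pow_log_le_self 2 hx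
theorem lt_pow_mu_succ (x : ℕ) : x < 2 ^ (mu x + 1) :=
  Nat.lt_pow_succ_log_self (by norm_num) x
theorem mu_eq {x k : ℕ} (h1 : 2 ^ k ≤ x) (h2 : x < 2 ^ (k + 1)) : mu x = k :=
  Nat.log_eq_of_pow_le_of_lt_pow h1 h2
theorem mu_two_pow (j : ℕ) : mu (2 ^ j) = j := Nat.log_pow (by norm_num) j

theorem two_pow_lam_dvd (x : ℕ) : 2 ^ lam x ∣ x := pow_padicValNat_dvd
theorem lam_dvd_iff {x k : ℕ} (hx : x ≠ 0) : 2 ^ k ∣ x ↔ k ≤ lam x :=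
  padicValNat_dvd_iff_le hx
theorem lam_two_pow (j : ℕ) : lam (2 ^ j) = j := padicValNat.prime_pow j
theorem lam_le_mu {x : ℕ} (hx : x ≠ 0) : lam x ≤ mu x := by
  have h1 : 2 ^ lam x ≤ x := Nat.le_of_dvd (Nat.pos_of_ne_zero hx) (two_pow_lam_dvd x)
  exact (Nat.le_log_iff_pow_le (by norm_num) hx).2 h1

theorem lam_add {j y : ℕ} (h0 : y ≠ 0) (hlt : y < 2 ^ j) : lam (2 ^ j + y) = lam y := by
  have hsum : 2 ^ j + y ≠ 0 := by positivity
  have hmuy : mu y < j := Nat.log_lt_of_lt_pow h0 hlt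
  have hly : lam y ≤ mu y := lam_le_mu h0
  apply le_antisymm
  · -- lam (sum) ≤ lam y
    have hL : 2 ^ lam (2 ^ j + y) ∣ 2 ^ j + y := two_pow_lam_dvd _
    have hLj : lam (2 ^ j + y) ≤ j := by
      have hmus : mu (2 ^ j + y) = j := mu_eq (Nat.le_add_right _ _) (by
        have : y < 2 ^ j := hlt
        have : 2 ^ j + y < 2 ^ j + 2 ^ j := by omega
        calc 2 ^ j + y < 2 ^ j + 2 ^ j := this
          _ = 2 ^ (j + 1) := by ring
      )
      have := lam_le_mu hsum
      omega
    have hdvd2j : 2 ^ lam (2 ^ j + y) ∣ 2 ^ j := pow_dvd_pow 2 hLj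
    have : 2 ^ lam (2 ^ j + y) ∣ y := (Nat.dvd_add_right hdvd2j).mp hL
    exact (lam_dvd_iff h0).1 this
  · -- lam y ≤ lam sum
    have h1 : 2 ^ lam y ∣ y := two_pow_lam_dvd y
    have h2 : 2 ^ lam y ∣ 2 ^ j := pow_dvd_pow 2 (by omega)
    exact (lam_dvd_iff hsum).1 (dvd_add h2 h1)

theorem add_lt_pow_of_lam {rest q : ℕ} (h0 : rest ≠ 0) (hq : q < 2 ^ lam rest) :
    rest + q < 2 ^ (mu rest + 1) := by
  have h1 : 2 ^ lam rest ∣ rest := two_pow_lam_dvd rest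
  have h2 : 2 ^ lam rest ∣ 2 ^ (mu rest + 1) := pow_dvd_pow 2 (by have := lam_le_mu h0; omega)
  have h3 : rest < 2 ^ (mu rest + 1) := lt_pow_mu_succ rest
  have h4 : 2 ^ lam rest ∣ 2 ^ (mu rest + 1) - rest := Nat.dvd_sub h2 h1
  have h5 : 2 ^ lam rest ≤ 2 ^ (mu rest + 1) - rest :=
    Nat.le_of_dvd (by omega) h4
  omega

def scanZ (hQB : QOK Q) (s : ℕ) (v p rest : ℕ) : ZMod r :=
  if hv : v = 0 then
    if hrest : rest = 0 then 0
    else if hu : Q (mu rest) p s = 2 ^ mu rest then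
      1 + scanZ hQB s 0 (mu rest) (rest - 2 ^ mu rest)
    else
      scanZ hQB s (Q (mu rest) p s - 2 ^ mu rest) (mu rest) (rest - 2 ^ mu rest)
  else
    if hrest : rest = 0 then
      (if hvm : v = 2 ^ mu v then
        1 + scanZ hQB s 0 (mu v) (Q (mu v) p s - 2 ^ mu v)
      else
        scanZ hQB s (v - 2 ^ mu v) (mu v) (Q (mu v) p s - 2 ^ mu v)) - 1
    else if hjm : mu rest = mu v then
      if hvm : v = 2 ^ mu v then
        1 + scanZ hQB s 0 (mu v) (rest - 2 ^ mu rest)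
      else
        scanZ hQB s (v - 2 ^ mu v) (mu v) (rest - 2 ^ mu rest)
    else
      scanZ hQB s v p 0 + scanZ hQB s 0 p rest
termination_by (v + rest)
decreasing_by
  all_goals
    (try have e1 : 0 < 2 ^ mu rest := Nat.pow_pos (by norm_num)) <;>
    (try have e2 : 0 < 2 ^ mu v := Nat.pow_pos (by norm_num)) <;>
    (try have e3 : 2 ^ mu v ≤ v := pow_mu_le hv) <;>
    (try have e4 : 2 ^ mu rest ≤ rest := pow_mu_le hrest) <;>
    (try have e5 := hQB.lt (mu rest) p s) <;>
    (try have e6 := hQB.lt (mu v) p s) <;>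
    (try have e7 : (2:ℕ) ^ (mu rest + 1) = 2 * 2 ^ mu rest := by ring) <;>
    (try have e8 : (2:ℕ) ^ (mu v + 1) = 2 * 2 ^ mu v := by ring) <;>
    omega

variable {Q} (hQB : QOK Q)

theorem scanZ_zero (s p : ℕ) : scanZ r Q hQB s 0 p 0 = 0 := by
  rw [scanZ]; simp

theorem scan_self (s : ℕ) : ∀ v, v ≠ 0 → ∀ p, scanZ r Q hQB s v p v = 1 := by
  intro v
  induction v using Nat.strong_induction_on with
  | _ v ih =>
    intro hv p
    rw [scanZ, dif_neg hv, dif_neg hv, dif_pos rfl]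
    by_cases hvm : v = 2 ^ mu v
    · rw [dif_pos hvm]
      have hz : v - 2 ^ mu v = 0 := by omega
      rw [hz, scanZ_zero]
      ring
    · rw [dif_neg hvm]
      have h1 : 2 ^ mu v ≤ v := pow_mu_le hv
      have h2 : 0 < 2 ^ mu v := Nat.pow_pos (by norm_num)
      exact ih (v - 2 ^ mu v) (by omega) (by omega) (mu v)

theorem scan_feed (s : ℕ) (v p n : ℕ) :
    scanZ r Q hQB s v p (Q n p s) = scanZ r Q hQB s v p 0 + 1 := by
  have hq0 : Q n p s ≠ 0 := (hQB.pos n p s).ne'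
  have hqmu : mu (Q n p s) = n := hQB.mu n p s
  by_cases hv : v = 0
  · subst hv
    rw [scanZ_zero, scanZ, dif_pos rfl, dif_neg hq0, hqmu]
    by_cases hu : Q n p s = 2 ^ n
    · rw [dif_pos hu]
      have hz : Q n p s - 2 ^ n = 0 := by omega
      rw [hz, scanZ_zero]; ring
    · rw [dif_neg hu]
      have h1 : 2 ^ n ≤ Q n p s := hQB.le n p s
      have h2 : Q n p s - 2 ^ n = Q n p s - 2 ^ n := rfl
      rw [scan_self r hQB s (Q n p s - 2 ^ n) (by omega) n]
      ring
  · by_cases hnm : n = mu v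
    · -- the feed exactly matches the expected block
      conv_lhs => rw [scanZ]
      rw [dif_neg hv, dif_neg hq0, dif_pos (by rw [hqmu, hnm])]
      conv_rhs => rw [scanZ]
      rw [dif_neg hv, dif_pos rfl]
      rw [hqmu, hnm]
      by_cases hvm : v = 2 ^ mu v
      · rw [dif_pos hvm]; ring
      · rw [dif_neg hvm]; ring
    · -- mismatch: abandon
      conv_lhs => rw [scanZ]
      rw [dif_neg hv, dif_neg hq0, dif_neg (by rw [hqmu]; exact hnm)]
      have h2 : scanZ r Q hQB s 0 p (Q n p s) = scanZ r Q hQB s 0 p 0 + 1 := by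
        rw [scanZ_zero, scanZ, dif_pos rfl, dif_neg hq0, hqmu]
        by_cases hu : Q n p s = 2 ^ n
        · rw [dif_pos hu]
          have hz : Q n p s - 2 ^ n = 0 := by omega
          rw [hz, scanZ_zero]; ring
        · rw [dif_neg hu]
          have h1 : 2 ^ n ≤ Q n p s := hQB.le n p s
          rw [scan_self r hQB s (Q n p s - 2 ^ n) (by omega) n]
          ring
      rw [h2, scanZ_zero]
      ring

theorem scanZ_v0 (s p rest : ℕ) (hrest : rest ≠ 0) :
    scanZ r Q hQB s 0 p rest =
      if Q (mu rest) p s = 2 ^ mu rest then 1 + scanZ r Q hQB s 0 (mu rest) (rest - 2 ^ mu rest)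
      else scanZ r Q hQB s (Q (mu rest) p s - 2 ^ mu rest) (mu rest) (rest - 2 ^ mu rest) := by
  rw [scanZ, dif_pos rfl, dif_neg hrest, dite_eq_ite]

theorem scanZ_pend (s v p : ℕ) (hv : v ≠ 0) :
    scanZ r Q hQB s v p 0 =
      (if v = 2 ^ mu v then 1 + scanZ r Q hQB s 0 (mu v) (Q (mu v) p s - 2 ^ mu v)
       else scanZ r Q hQB s (v - 2 ^ mu v) (mu v) (Q (mu v) p s - 2 ^ mu v)) - 1 := by
  rw [scanZ, dif_neg hv, dif_pos rfl, dite_eq_ite]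

theorem scanZ_match (s v p rest : ℕ) (hv : v ≠ 0) (hrest : rest ≠ 0) (hjm : mu rest = mu v) :
    scanZ r Q hQB s v p rest =
      if v = 2 ^ mu v then 1 + scanZ r Q hQB s 0 (mu v) (rest - 2 ^ mu rest)
      else scanZ r Q hQB s (v - 2 ^ mu v) (mu v) (rest - 2 ^ mu rest) := by
  rw [scanZ, dif_neg hv, dif_neg hrest, dif_pos hjm, dite_eq_ite]

theorem scanZ_abandon (s v p rest : ℕ) (hv : v ≠ 0) (hrest : rest ≠ 0) (hjm : mu rest ≠ mu v) :
    scanZ r Q hQB s v p rest = scanZ r Q hQB s v p 0 + scanZ r Q hQB s 0 p rest := by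
  rw [scanZ, dif_neg hv, dif_neg hrest, dif_neg hjm]

theorem scan_add (s : ℕ) :
    ∀ N v p rest, v + rest ≤ N → rest ≠ 0 → ∀ n, n < lam rest →
      scanZ r Q hQB s v p (rest + Q n (lam rest) s) = scanZ r Q hQB s v p rest + 1 := by
  intro N
  induction N with
  | zero => intro v p rest hN hrest; omega
  | succ N IH =>
    intro v p rest hN hrest n hn
    have hq0 : Q n (lam rest) s ≠ 0 := (hQB.pos n (lam rest) s).ne'
    have hqlam : Q n (lam rest) s < 2 ^ lam rest := by
      have h1 := hQB.lt n (lam rest) s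
      have h2 : (2:ℕ) ^ (n+1) ≤ 2 ^ lam rest := Nat.pow_le_pow_right (by norm_num) hn
      omega
    have hjle : 2 ^ mu rest ≤ rest := pow_mu_le hrest
    have hjpos : 0 < 2 ^ mu rest := Nat.pow_pos (by norm_num)
    have hrlt : rest < 2 ^ (mu rest + 1) := lt_pow_mu_succ rest
    have hrlt2 : (2:ℕ) ^ (mu rest + 1) = 2 * 2 ^ mu rest := by ring
    have hmusum : mu (rest + Q n (lam rest) s) = mu rest :=
      mu_eq (le_trans hjle (Nat.le_add_right _ _)) (add_lt_pow_of_lam hrest hqlam)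
    have hsum0 : rest + Q n (lam rest) s ≠ 0 := by omega
    have hsub : rest + Q n (lam rest) s - 2 ^ mu rest
        = (rest - 2 ^ mu rest) + Q n (lam rest) s := by omega
    -- key: continuing below the top block of `rest`
    have hkey : ∀ v' p', v' + (rest - 2 ^ mu rest) ≤ N → (rest = 2 ^ mu rest → p' = mu rest) →
        scanZ r Q hQB s v' p' ((rest - 2 ^ mu rest) + Q n (lam rest) s) =
        scanZ r Q hQB s v' p' (rest - 2 ^ mu rest) + 1 := by
      intro v' p' hb hp'
      by_cases hr2 : rest = 2 ^ mu rest
      · have h0 : rest - 2 ^ mu rest = 0 := by omega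
        have hlr : lam rest = mu rest := by
          conv_lhs => rw [hr2]
          rw [lam_two_pow]
        rw [h0, zero_add, hlr, hp' hr2]
        exact scan_feed r hQB s v' (mu rest) n
      · have hrp0 : rest - 2 ^ mu rest ≠ 0 := by omega
        have hlam' : lam (rest - 2 ^ mu rest) = lam rest := by
          have hre : rest = 2 ^ mu rest + (rest - 2 ^ mu rest) := by omega
          conv_rhs => rw [hre]
          rw [lam_add hrp0 (by omega)]
        have hres := IH v' p' (rest - 2 ^ mu rest) hb hrp0 n (by rw [hlam']; exact hn)
        rw [hlam'] at hres
        exact hres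
    by_cases hv : v = 0
    · subst hv
      rw [scanZ_v0 r hQB s p _ hsum0, scanZ_v0 r hQB s p rest hrest, hmusum, hsub]
      split_ifs with hu
      · rw [hkey 0 (mu rest) (by omega) (fun _ => rfl)]
        ring
      · have hub : Q (mu rest) p s < 2 ^ (mu rest + 1) := hQB.lt (mu rest) p s
        rw [hkey (Q (mu rest) p s - 2 ^ mu rest) (mu rest) (by omega) (fun _ => rfl)]
    · by_cases hjm : mu rest = mu v
      · have hvle : 2 ^ mu v ≤ v := pow_mu_le hv
        have hvpos : 0 < 2 ^ mu v := Nat.pow_pos (by norm_num)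
        rw [scanZ_match r hQB s v p _ hv hsum0 (by rw [hmusum]; exact hjm),
            scanZ_match r hQB s v p rest hv hrest hjm, hmusum, hsub]
        split_ifs with hvm
        · rw [hkey 0 (mu v) (by omega) (fun _ => hjm.symm ▸ rfl)]
          ring
        · rw [hkey (v - 2 ^ mu v) (mu v) (by omega) (fun _ => hjm.symm ▸ rfl)]
      · rw [scanZ_abandon r hQB s v p _ hv hsum0 (by rw [hmusum]; exact hjm),
            scanZ_abandon r hQB s v p rest hv hrest hjm,
            IH 0 p rest (by omega) hrest n hn]
        ring

def cfun (s : ℕ) : ℕ → ZMod r := fun x => scanZ r Q hQB s 0 s (x % 2 ^ s)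

theorem c_edge (w : ℕ) (hw : 0 < w) (n : ℕ) (hn : n < lam w) :
    scanZ r Q hQB (mu w) 0 (mu w) ((w + Q n (lam w) (mu w)) % 2 ^ mu w) =
    scanZ r Q hQB (mu w) 0 (mu w) (w % 2 ^ mu w) + 1 := by
  have hws : 2 ^ mu w ≤ w := pow_mu_le hw.ne'
  have hwlt : w < 2 ^ (mu w + 1) := lt_pow_mu_succ w
  have hp2 : (2:ℕ) ^ (mu w + 1) = 2 * 2 ^ mu w := by ring
  have hrw : w % 2 ^ mu w = w - 2 ^ mu w := by
    rw [Nat.mod_eq_sub_mod hws]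
    exact Nat.mod_eq_of_lt (by omega)
  by_cases hr0 : w - 2 ^ mu w = 0
  · -- w = 2 ^ mu w
    have hwe : w = 2 ^ mu w := by omega
    have hlw : lam w = mu w := by conv_lhs => rw [hwe]; rw [lam_two_pow]
    have hqlt : Q n (lam w) (mu w) < 2 ^ mu w := by
      have h1 := hQB.lt n (lam w) (mu w)
      have h2 : (2:ℕ) ^ (n+1) ≤ 2 ^ mu w := Nat.pow_le_pow_right (by norm_num) (by omega)
      omega
    have hsum : (w + Q n (lam w) (mu w)) % 2 ^ mu w = Q n (lam w) (mu w) := by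
      rw [Nat.mod_eq_sub_mod (by omega)]
      have he : w + Q n (lam w) (mu w) - 2 ^ mu w = Q n (lam w) (mu w) := by omega
      rw [he]
      exact Nat.mod_eq_of_lt hqlt
    rw [hsum, hrw, hr0, hlw]
    exact scan_feed r hQB (mu w) 0 (mu w) n
  · -- w = 2 ^ mu w + rest with rest ≠ 0
    have hrlt : w - 2 ^ mu w < 2 ^ mu w := by omega
    have hlw : lam w = lam (w - 2 ^ mu w) := by
      have hre : w = 2 ^ mu w + (w - 2 ^ mu w) := by omega
      conv_lhs => rw [hre]
      rw [lam_add hr0 hrlt]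
    have hqlam : Q n (lam w) (mu w) < 2 ^ lam (w - 2 ^ mu w) := by
      have h1 := hQB.lt n (lam w) (mu w)
      have h2 : (2:ℕ) ^ (n+1) ≤ 2 ^ lam (w - 2 ^ mu w) :=
        Nat.pow_le_pow_right (by norm_num) (by rw [← hlw]; omega)
      omega
    have hmurlt : mu (w - 2 ^ mu w) < mu w := Nat.log_lt_of_lt_pow hr0 hrlt
    have hradd : (w - 2 ^ mu w) + Q n (lam w) (mu w) < 2 ^ mu w := by
      have h3 := add_lt_pow_of_lam hr0 hqlam
      have h4 : (2:ℕ) ^ (mu (w - 2 ^ mu w) + 1) ≤ 2 ^ mu w :=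
        Nat.pow_le_pow_right (by norm_num) (by omega)
      omega
    have hsum : (w + Q n (lam w) (mu w)) % 2 ^ mu w
        = (w - 2 ^ mu w) + Q n (lam w) (mu w) := by
      rw [Nat.mod_eq_sub_mod (by omega)]
      have he : w + Q n (lam w) (mu w) - 2 ^ mu w
          = (w - 2 ^ mu w) + Q n (lam w) (mu w) := by omega
      rw [he]
      exact Nat.mod_eq_of_lt hradd
    rw [hsum, hrw]
    have := scan_add r hQB (mu w) (w - 2 ^ mu w) 0 (mu w) (w - 2 ^ mu w) (by omega) hr0 n
      (by rw [← hlw]; exact hn)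
    rw [← hlw] at this
    exact this

theorem mu_edge (hQB : QOK Q) (w : ℕ) (hw : 0 < w) (n : ℕ) (hn : n < lam w) :
    mu (w + Q n (lam w) (mu w)) = mu w := by
  have hws : 2 ^ mu w ≤ w := pow_mu_le hw.ne'
  have hwlt : w < 2 ^ (mu w + 1) := lt_pow_mu_succ w
  have hlmu : lam w ≤ mu w := lam_le_mu hw.ne'
  have hqlt : Q n (lam w) (mu w) < 2 ^ lam w := by
    have h1 := hQB.lt n (lam w) (mu w)
    have h2 : (2:ℕ) ^ (n+1) ≤ 2 ^ lam w := Nat.pow_le_pow_right (by norm_num) hn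
    omega
  apply mu_eq (by omega)
  exact add_lt_pow_of_lam hw.ne' hqlt |>.trans_le
    (Nat.pow_le_pow_right (by norm_num) (by omega))

end Stmt8Aux



def deP (B sc : ℕ) : ℕ := sc % B
def deV (B sc : ℕ) : ℕ := sc / B % B
def deM (B sc : ℕ) : ℕ := sc / B / B
def enc (B M v p : ℕ) : ℕ := (M * B + v) * B + p

theorem enc_div {B M v p : ℕ} (hp : p < B) : enc B M v p / B = M * B + v := by
  unfold enc
  rw [mul_comm (M * B + v) B, Nat.mul_add_div (by omega), Nat.div_eq_of_lt hp, Nat.add_zero]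

theorem deP_enc {B M v p : ℕ} (hp : p < B) : deP B (enc B M v p) = p := by
  unfold deP enc
  rw [mul_comm (M * B + v) B, Nat.mul_add_mod, Nat.mod_eq_of_lt hp]

theorem deV_enc {B M v p : ℕ} (hv : v < B) (hp : p < B) : deV B (enc B M v p) = v := by
  unfold deV
  rw [enc_div hp, mul_comm M B, Nat.mul_add_mod, Nat.mod_eq_of_lt hv]

theorem deM_enc {B M v p : ℕ} (hv : v < B) (hp : p < B) : deM B (enc B M v p) = M := by
  unfold deM
  rw [enc_div hp, mul_comm M B, Nat.mul_add_div (by omega), Nat.div_eq_of_lt hv, Nat.add_zero]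

theorem deM_le {B sc : ℕ} : deM B sc * B * B ≤ sc := by
  unfold deM
  calc sc / B / B * B * B ≤ sc / B * B := Nat.mul_le_mul_right B (Nat.div_mul_le_self _ B)
    _ ≤ sc := Nat.div_mul_le_self _ B

theorem enc_lt_of_lt {B M' v p M : ℕ} (hM : M' < M) (hv : v < B) (hp : p < B) :
    enc B M' v p < M * B * B := by
  unfold enc
  have h1 : M' * B + v < M * B := by
    calc M' * B + v < M' * B + B := by omega
      _ = (M' + 1) * B := by ring
      _ ≤ M * B := Nat.mul_le_mul_right B (by omega)
  calc (M' * B + v) * B + p < (M' * B + v) * B + B := by omega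
    _ = (M' * B + v + 1) * B := by ring
    _ ≤ M * B * B := Nat.mul_le_mul_right B (by omega)

theorem deV_lt {B sc : ℕ} (hB : 0 < B) : deV B sc < B := Nat.mod_lt _ hB
theorem deP_lt {B sc : ℕ} (hB : 0 < B) : deP B sc < B := Nat.mod_lt _ hB

theorem primrec_log2 : Primrec (fun x => Nat.log 2 x) := by
  have h : Primrec (fun x => Nat.findGreatest (fun k => 2 ^ k ≤ x) x) := by
    apply Primrec.nat_findGreatest Primrec.id
    · exact Primrec.nat_le.comp ((Primrec₂.unpaired'.mp Nat.Primrec.pow).comp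
        (Primrec.const 2) Primrec.snd) Primrec.fst
  apply h.of_eq
  intro x
  rcases eq_or_ne x 0 with rfl | hx
  · simp [Nat.findGreatest]
  · rw [Nat.findGreatest_eq_iff]
    refine ⟨?_, fun _ => Nat.pow_log_le_self 2 hx, ?_⟩
    · calc Nat.log 2 x ≤ 2 ^ Nat.log 2 x := le_of_lt (Nat.lt_two_pow_self)
        _ ≤ x := Nat.pow_log_le_self 2 hx
    · intro k hk _ hle
      exact absurd ((Nat.le_log_iff_pow_le (by norm_num) hx).2 hle) (by omega)

theorem primrec_mu : Primrec mu := primrec_log2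

def stepK (r B sc u0 : ℕ) : ℕ :=
  if 0 < B ∧ deM B sc < B ∧ deV B sc ≤ deM B sc then
    if deV B sc = 0 then
      if deM B sc - deV B sc = 0 then 0
      else if u0 = 2 ^ mu (deM B sc - deV B sc) then 1 else 0
    else if deM B sc - deV B sc = 0 then
      if deV B sc = 2 ^ mu (deV B sc) then 0 else r - 1
    else if mu (deM B sc - deV B sc) = mu (deV B sc) then
      if deV B sc = 2 ^ mu (deV B sc) then 1 else 0
    else 0
  else 0

def stepC1 (B sc u0 q0 : ℕ) : ℕ :=
  if 0 < B ∧ deM B sc < B ∧ deV B sc ≤ deM B sc then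
    if deV B sc = 0 then
      if deM B sc - deV B sc = 0 then 0
      else if u0 = 2 ^ mu (deM B sc - deV B sc) then
        enc B (deM B sc - deV B sc - 2 ^ mu (deM B sc - deV B sc)) 0
          (mu (deM B sc - deV B sc))
      else
        enc B (u0 - 2 ^ mu (deM B sc - deV B sc)
            + (deM B sc - deV B sc - 2 ^ mu (deM B sc - deV B sc)))
          (u0 - 2 ^ mu (deM B sc - deV B sc)) (mu (deM B sc - deV B sc))
    else if deM B sc - deV B sc = 0 then
      if deV B sc = 2 ^ mu (deV B sc) then
        enc B (q0 - 2 ^ mu (deV B sc)) 0 (mu (deV B sc))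
      else
        enc B (q0 - 2 ^ mu (deV B sc) + (deV B sc - 2 ^ mu (deV B sc)))
          (deV B sc - 2 ^ mu (deV B sc)) (mu (deV B sc))
    else if mu (deM B sc - deV B sc) = mu (deV B sc) then
      if deV B sc = 2 ^ mu (deV B sc) then
        enc B (deM B sc - deV B sc - 2 ^ mu (deM B sc - deV B sc)) 0
          (mu (deV B sc))
      else
        enc B (deV B sc - 2 ^ mu (deV B sc)
            + (deM B sc - deV B sc - 2 ^ mu (deM B sc - deV B sc)))
          (deV B sc - 2 ^ mu (deV B sc)) (mu (deV B sc))
    else enc B (deV B sc) (deV B sc) (deP B sc)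
  else 0

def stepC2 (B sc : ℕ) : ℕ :=
  if (0 < B ∧ deM B sc < B ∧ deV B sc ≤ deM B sc) ∧ ¬deV B sc = 0 ∧
      ¬(deM B sc - deV B sc = 0) ∧
      ¬(mu (deM B sc - deV B sc) = mu (deV B sc)) then
    enc B (deM B sc - deV B sc) 0 (deP B sc)
  else 0

section PR

private theorem ppow : Primrec₂ (fun a b : ℕ => a ^ b) := Primrec₂.unpaired'.mp Nat.Primrec.pow

theorem primrec_stepK (r : ℕ) : Primrec (fun t : ℕ × ℕ × ℕ => stepK r t.1 t.2.1 t.2.2) := by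
  have hB : Primrec (fun t : ℕ × ℕ × ℕ => t.1) := Primrec.fst
  have hsc : Primrec (fun t : ℕ × ℕ × ℕ => t.2.1) := Primrec.fst.comp Primrec.snd
  have hu0 : Primrec (fun t : ℕ × ℕ × ℕ => t.2.2) := Primrec.snd.comp Primrec.snd
  have hV : Primrec (fun t : ℕ × ℕ × ℕ => deV t.1 t.2.1) :=
    Primrec.nat_mod.comp (Primrec.nat_div.comp hsc hB) hB
  have hM : Primrec (fun t : ℕ × ℕ × ℕ => deM t.1 t.2.1) :=
    Primrec.nat_div.comp (Primrec.nat_div.comp hsc hB) hB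
  have hR : Primrec (fun t : ℕ × ℕ × ℕ => deM t.1 t.2.1 - deV t.1 t.2.1) :=
    Primrec.nat_sub.comp hM hV
  have hJ : Primrec (fun t : ℕ × ℕ × ℕ => mu (deM t.1 t.2.1 - deV t.1 t.2.1)) :=
    primrec_mu.comp hR
  have hm : Primrec (fun t : ℕ × ℕ × ℕ => mu (deV t.1 t.2.1)) := primrec_mu.comp hV
  have hpJ : Primrec (fun t : ℕ × ℕ × ℕ => 2 ^ mu (deM t.1 t.2.1 - deV t.1 t.2.1)) :=
    ppow.comp (Primrec.const 2) hJ
  have hpm : Primrec (fun t : ℕ × ℕ × ℕ => 2 ^ mu (deV t.1 t.2.1)) :=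
    ppow.comp (Primrec.const 2) hm
  have hvalid : PrimrecPred (fun t : ℕ × ℕ × ℕ =>
      0 < t.1 ∧ deM t.1 t.2.1 < t.1 ∧ deV t.1 t.2.1 ≤ deM t.1 t.2.1) :=
    ((Primrec.nat_lt.comp (Primrec.const 0) hB).and
      ((Primrec.nat_lt.comp hM hB).and (Primrec.nat_le.comp hV hM)))
  unfold stepK
  apply Primrec.ite hvalid _ (Primrec.const 0)
  apply Primrec.ite (Primrec.eq.comp hV (Primrec.const 0))
  · apply Primrec.ite (Primrec.eq.comp hR (Primrec.const 0)) (Primrec.const 0)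
    exact Primrec.ite (Primrec.eq.comp hu0 hpJ) (Primrec.const 1) (Primrec.const 0)
  · apply Primrec.ite (Primrec.eq.comp hR (Primrec.const 0))
    · exact Primrec.ite (Primrec.eq.comp hV hpm) (Primrec.const 0) (Primrec.const (r - 1))
    · apply Primrec.ite (Primrec.eq.comp hJ hm) _ (Primrec.const 0)
      exact Primrec.ite (Primrec.eq.comp hV hpm) (Primrec.const 1) (Primrec.const 0)

theorem primrec_enc {α : Type} [Primcodable α] {fB fM fv fp : α → ℕ}
    (hB : Primrec fB) (hM : Primrec fM) (hv : Primrec fv) (hp : Primrec fp) :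
    Primrec (fun t => enc (fB t) (fM t) (fv t) (fp t)) := by
  unfold enc
  exact Primrec.nat_add.comp
    (Primrec.nat_mul.comp
      (Primrec.nat_add.comp (Primrec.nat_mul.comp hM hB) hv) hB) hp

theorem primrec_stepC1 : Primrec (fun t : ℕ × ℕ × ℕ × ℕ => stepC1 t.1 t.2.1 t.2.2.1 t.2.2.2) := by
  have hB : Primrec (fun t : ℕ × ℕ × ℕ × ℕ => t.1) := Primrec.fst
  have hsc : Primrec (fun t : ℕ × ℕ × ℕ × ℕ => t.2.1) := Primrec.fst.comp Primrec.snd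
  have hu0 : Primrec (fun t : ℕ × ℕ × ℕ × ℕ => t.2.2.1) :=
    Primrec.fst.comp (Primrec.snd.comp Primrec.snd)
  have hq0 : Primrec (fun t : ℕ × ℕ × ℕ × ℕ => t.2.2.2) :=
    Primrec.snd.comp (Primrec.snd.comp Primrec.snd)
  have hV : Primrec (fun t : ℕ × ℕ × ℕ × ℕ => deV t.1 t.2.1) :=
    Primrec.nat_mod.comp (Primrec.nat_div.comp hsc hB) hB
  have hM : Primrec (fun t : ℕ × ℕ × ℕ × ℕ => deM t.1 t.2.1) :=
    Primrec.nat_div.comp (Primrec.nat_div.comp hsc hB) hB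
  have hP : Primrec (fun t : ℕ × ℕ × ℕ × ℕ => deP t.1 t.2.1) := Primrec.nat_mod.comp hsc hB
  have hR : Primrec (fun t : ℕ × ℕ × ℕ × ℕ => deM t.1 t.2.1 - deV t.1 t.2.1) :=
    Primrec.nat_sub.comp hM hV
  have hJ : Primrec (fun t : ℕ × ℕ × ℕ × ℕ => mu (deM t.1 t.2.1 - deV t.1 t.2.1)) :=
    primrec_mu.comp hR
  have hm : Primrec (fun t : ℕ × ℕ × ℕ × ℕ => mu (deV t.1 t.2.1)) := primrec_mu.comp hV
  have hpJ : Primrec (fun t : ℕ × ℕ × ℕ × ℕ =>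
      2 ^ mu (deM t.1 t.2.1 - deV t.1 t.2.1)) := ppow.comp (Primrec.const 2) hJ
  have hpm : Primrec (fun t : ℕ × ℕ × ℕ × ℕ => 2 ^ mu (deV t.1 t.2.1)) :=
    ppow.comp (Primrec.const 2) hm
  have hvalid : PrimrecPred (fun t : ℕ × ℕ × ℕ × ℕ =>
      0 < t.1 ∧ deM t.1 t.2.1 < t.1 ∧ deV t.1 t.2.1 ≤ deM t.1 t.2.1) :=
    ((Primrec.nat_lt.comp (Primrec.const 0) hB).and
      ((Primrec.nat_lt.comp hM hB).and (Primrec.nat_le.comp hV hM)))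
  unfold stepC1
  apply Primrec.ite hvalid _ (Primrec.const 0)
  apply Primrec.ite (Primrec.eq.comp hV (Primrec.const 0))
  · apply Primrec.ite (Primrec.eq.comp hR (Primrec.const 0)) (Primrec.const 0)
    apply Primrec.ite (Primrec.eq.comp hu0 hpJ)
    · exact primrec_enc hB (Primrec.nat_sub.comp hR hpJ) (Primrec.const 0) hJ
    · exact primrec_enc hB
        (Primrec.nat_add.comp (Primrec.nat_sub.comp hu0 hpJ) (Primrec.nat_sub.comp hR hpJ))
        (Primrec.nat_sub.comp hu0 hpJ) hJ
  · apply Primrec.ite (Primrec.eq.comp hR (Primrec.const 0))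
    · apply Primrec.ite (Primrec.eq.comp hV hpm)
      · exact primrec_enc hB (Primrec.nat_sub.comp hq0 hpm) (Primrec.const 0) hm
      · exact primrec_enc hB
          (Primrec.nat_add.comp (Primrec.nat_sub.comp hq0 hpm) (Primrec.nat_sub.comp hV hpm))
          (Primrec.nat_sub.comp hV hpm) hm
    · apply Primrec.ite (Primrec.eq.comp hJ hm) _
        (primrec_enc hB hV hV hP)
      apply Primrec.ite (Primrec.eq.comp hV hpm)
      · exact primrec_enc hB (Primrec.nat_sub.comp hR hpJ) (Primrec.const 0) hm
      · exact primrec_enc hB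
          (Primrec.nat_add.comp (Primrec.nat_sub.comp hV hpm) (Primrec.nat_sub.comp hR hpJ))
          (Primrec.nat_sub.comp hV hpm) hm

theorem primrec_stepC2 : Primrec (fun t : ℕ × ℕ => stepC2 t.1 t.2) := by
  have hB : Primrec (fun t : ℕ × ℕ => t.1) := Primrec.fst
  have hsc : Primrec (fun t : ℕ × ℕ => t.2) := Primrec.snd
  have hV : Primrec (fun t : ℕ × ℕ => deV t.1 t.2) :=
    Primrec.nat_mod.comp (Primrec.nat_div.comp hsc hB) hB
  have hM : Primrec (fun t : ℕ × ℕ => deM t.1 t.2) :=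
    Primrec.nat_div.comp (Primrec.nat_div.comp hsc hB) hB
  have hP : Primrec (fun t : ℕ × ℕ => deP t.1 t.2) := Primrec.nat_mod.comp hsc hB
  have hR : Primrec (fun t : ℕ × ℕ => deM t.1 t.2 - deV t.1 t.2) := Primrec.nat_sub.comp hM hV
  have hJ : Primrec (fun t : ℕ × ℕ => mu (deM t.1 t.2 - deV t.1 t.2)) :=
    primrec_mu.comp hR
  have hm : Primrec (fun t : ℕ × ℕ => mu (deV t.1 t.2)) := primrec_mu.comp hV
  unfold stepC2
  apply Primrec.ite _ (primrec_enc hB hR (Primrec.const 0) hP) (Primrec.const 0)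
  exact (((Primrec.nat_lt.comp (Primrec.const 0) hB).and
      ((Primrec.nat_lt.comp hM hB).and (Primrec.nat_le.comp hV hM))).and
    (((Primrec.eq.comp hV (Primrec.const 0)).not).and
      (((Primrec.eq.comp hR (Primrec.const 0)).not).and
        ((Primrec.eq.comp hJ hm).not))))

end PR


def Fc (r : ℕ) (Q : ℕ → ℕ → ℕ → ℕ) (hQB : QOK Q) (a sc : ℕ) : ℕ :=
  if 0 < a.unpair.2 ∧ deM a.unpair.2 sc < a.unpair.2 ∧ deV a.unpair.2 sc ≤ deM a.unpair.2 sc then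
    (scanZ r Q hQB a.unpair.1 (deV a.unpair.2 sc) (deP a.unpair.2 sc)
      (deM a.unpair.2 sc - deV a.unpair.2 sc)).val
  else 0

def gfun (r : ℕ) (Q : ℕ → ℕ → ℕ → ℕ) (a : ℕ) (hist : List ℕ) : Option ℕ :=
  some ((stepK r a.unpair.2 hist.length
        (Q (mu (deM a.unpair.2 hist.length - deV a.unpair.2 hist.length))
           (deP a.unpair.2 hist.length) a.unpair.1)
      + hist.getD (stepC1 a.unpair.2 hist.length
          (Q (mu (deM a.unpair.2 hist.length - deV a.unpair.2 hist.length))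
             (deP a.unpair.2 hist.length) a.unpair.1)
          (Q (mu (deV a.unpair.2 hist.length)) (deP a.unpair.2 hist.length) a.unpair.1)) 0
      + hist.getD (stepC2 a.unpair.2 hist.length) 0) % r)

set_option maxHeartbeats 2000000 in
theorem computable_gfun (r : ℕ) (Q : ℕ → ℕ → ℕ → ℕ)
    (hQ : Computable (fun p : ℕ × ℕ × ℕ => Q p.1 p.2.1 p.2.2)) :
    Computable₂ (gfun r Q) := by
  have ha : Primrec (fun x : ℕ × List ℕ => x.1) := Primrec.fst
  have hhist : Computable (fun x : ℕ × List ℕ => x.2) := Computable.snd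
  have hB : Primrec (fun x : ℕ × List ℕ => x.1.unpair.2) :=
    Primrec.snd.comp (Primrec.unpair.comp ha)
  have hs : Primrec (fun x : ℕ × List ℕ => x.1.unpair.1) :=
    Primrec.fst.comp (Primrec.unpair.comp ha)
  have hlen : Primrec (fun x : ℕ × List ℕ => x.2.length) :=
    Primrec.list_length.comp Primrec.snd
  have hV : Primrec (fun x : ℕ × List ℕ => deV x.1.unpair.2 x.2.length) :=
    Primrec.nat_mod.comp (Primrec.nat_div.comp hlen hB) hB
  have hM : Primrec (fun x : ℕ × List ℕ => deM x.1.unpair.2 x.2.length) :=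
    Primrec.nat_div.comp (Primrec.nat_div.comp hlen hB) hB
  have hP : Primrec (fun x : ℕ × List ℕ => deP x.1.unpair.2 x.2.length) :=
    Primrec.nat_mod.comp hlen hB
  have hR : Primrec (fun x : ℕ × List ℕ =>
      deM x.1.unpair.2 x.2.length - deV x.1.unpair.2 x.2.length) := Primrec.nat_sub.comp hM hV
  have hu0 : Computable (fun x : ℕ × List ℕ =>
      Q (mu (deM x.1.unpair.2 x.2.length - deV x.1.unpair.2 x.2.length))
        (deP x.1.unpair.2 x.2.length) x.1.unpair.1) := by
    have harg : Primrec (fun x : ℕ × List ℕ =>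
        ((mu (deM x.1.unpair.2 x.2.length - deV x.1.unpair.2 x.2.length),
          (deP x.1.unpair.2 x.2.length, x.1.unpair.1)) : ℕ × ℕ × ℕ)) :=
      (primrec_mu.comp hR).pair (hP.pair hs)
    exact hQ.comp harg.to_comp
  have hq0 : Computable (fun x : ℕ × List ℕ =>
      Q (mu (deV x.1.unpair.2 x.2.length)) (deP x.1.unpair.2 x.2.length) x.1.unpair.1) := by
    have harg : Primrec (fun x : ℕ × List ℕ =>
        ((mu (deV x.1.unpair.2 x.2.length),
          (deP x.1.unpair.2 x.2.length, x.1.unpair.1)) : ℕ × ℕ × ℕ)) :=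
      (primrec_mu.comp hV).pair (hP.pair hs)
    exact hQ.comp harg.to_comp
  have hK : Computable (fun x : ℕ × List ℕ => stepK r x.1.unpair.2 x.2.length
      (Q (mu (deM x.1.unpair.2 x.2.length - deV x.1.unpair.2 x.2.length))
         (deP x.1.unpair.2 x.2.length) x.1.unpair.1)) :=
    (primrec_stepK r).to_comp.comp (hB.to_comp.pair (hlen.to_comp.pair hu0))
  have hC1 : Computable (fun x : ℕ × List ℕ => stepC1 x.1.unpair.2 x.2.length
      (Q (mu (deM x.1.unpair.2 x.2.length - deV x.1.unpair.2 x.2.length))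
         (deP x.1.unpair.2 x.2.length) x.1.unpair.1)
      (Q (mu (deV x.1.unpair.2 x.2.length)) (deP x.1.unpair.2 x.2.length) x.1.unpair.1)) :=
    primrec_stepC1.to_comp.comp (hB.to_comp.pair (hlen.to_comp.pair (hu0.pair hq0)))
  have hC2 : Computable (fun x : ℕ × List ℕ => stepC2 x.1.unpair.2 x.2.length) :=
    (primrec_stepC2.comp (hB.pair hlen)).to_comp
  have hg1 : Computable (fun x : ℕ × List ℕ => x.2.getD (stepC1 x.1.unpair.2 x.2.length
      (Q (mu (deM x.1.unpair.2 x.2.length - deV x.1.unpair.2 x.2.length))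
         (deP x.1.unpair.2 x.2.length) x.1.unpair.1)
      (Q (mu (deV x.1.unpair.2 x.2.length)) (deP x.1.unpair.2 x.2.length) x.1.unpair.1)) 0) :=
    (Primrec.list_getD 0).to_comp.comp hhist hC1
  have hg2 : Computable (fun x : ℕ × List ℕ =>
      x.2.getD (stepC2 x.1.unpair.2 x.2.length) 0) :=
    (Primrec.list_getD 0).to_comp.comp hhist hC2
  have hmod := Primrec.nat_mod.to_comp.comp
    (Primrec.nat_add.to_comp.comp (Primrec.nat_add.to_comp.comp hK hg1) hg2)
    (Computable.const r)
  exact (Computable.option_some.comp hmod).of_eq (fun x => rfl)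

theorem Fc_zero (r : ℕ) (Q : ℕ → ℕ → ℕ → ℕ) (hr : 1 < r) (hQB : QOK Q) (a : ℕ) :
    Fc r Q hQB a 0 = 0 := by
  haveI : NeZero r := ⟨by omega⟩
  unfold Fc
  split_ifs with h
  · simp only [deV, deM, deP, Nat.zero_div, Nat.zero_mod, Nat.sub_zero]
    rw [scanZ_zero]
    exact ZMod.val_zero
  · rfl


theorem mu_le_self (x : ℕ) : mu x ≤ x := Nat.log_le_self 2 x

theorem gfun_spec' (r : ℕ) (Q : ℕ → ℕ → ℕ → ℕ) (hr : 1 < r) (hQB : QOK Q) (a sc : ℕ) :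
    gfun r Q a ((List.range sc).map (Fc r Q hQB a)) = some (Fc r Q hQB a sc) := by
  haveI : NeZero r := ⟨by omega⟩
  haveI : Fact (1 < r) := ⟨hr⟩
  have hlen : ((List.range sc).map (Fc r Q hQB a)).length = sc := by simp
  have hget : ∀ i, i < sc →
      ((List.range sc).map (Fc r Q hQB a)).getD i 0 = Fc r Q hQB a i := by
    intro i hi
    rw [List.getD_eq_getElem?_getD, List.getElem?_map, List.getElem?_range hi]
    rfl
  have hget0 : ((List.range sc).map (Fc r Q hQB a)).getD 0 0 = 0 := by
    rcases Nat.eq_zero_or_pos sc with h | h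
    · subst h; rfl
    · rw [hget 0 h, Fc_zero r Q hr hQB]
  -- val helpers
  have hvlt : ∀ X : ZMod r, X.val < r := fun X => ZMod.val_lt X
  have hvmod : ∀ X : ZMod r, X.val % r = X.val := fun X => Nat.mod_eq_of_lt (hvlt X)
  have hv1 : ∀ X : ZMod r, (1 + X).val = (1 + X.val) % r := by
    intro X; rw [ZMod.val_add, ZMod.val_one]
  have hm1 : ((r - 1 : ℕ) : ZMod r) = -1 := by
    have h0 : ((r - 1 : ℕ) : ZMod r) + 1 = 0 := by
      have h2 : ((r - 1 : ℕ) : ZMod r) + ((1 : ℕ) : ZMod r) = (((r - 1) + 1 : ℕ) : ZMod r) :=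
        (Nat.cast_add _ _).symm
      rw [Nat.cast_one] at h2
      rw [h2, Nat.sub_add_cancel (by omega), ZMod.natCast_self]
    exact eq_neg_of_add_eq_zero_left h0
  have hvsub : ∀ X : ZMod r, (X - 1).val = (X.val + (r - 1)) % r := by
    intro X
    have e1 : (X - 1) = X + ((r - 1 : ℕ) : ZMod r) := by rw [hm1]; ring
    rw [e1, ZMod.val_add, ZMod.val_natCast, Nat.mod_eq_of_lt (show r - 1 < r by omega)]
  unfold gfun
  rw [hlen]
  by_cases hval : 0 < a.unpair.2 ∧ deM a.unpair.2 sc < a.unpair.2 ∧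
      deV a.unpair.2 sc ≤ deM a.unpair.2 sc
  swap
  · -- invalid code
    have hFc : Fc r Q hQB a sc = 0 := by unfold Fc; rw [if_neg hval]
    rw [hFc]
    unfold stepK stepC1 stepC2
    rw [if_neg hval, if_neg hval, if_neg (fun h => hval h.1), hget0]
    simp
  · have hval3 := hval
    obtain ⟨h1, h2, h3⟩ := hval
    have hFc : Fc r Q hQB a sc = (scanZ r Q hQB a.unpair.1 (deV a.unpair.2 sc)
        (deP a.unpair.2 sc) (deM a.unpair.2 sc - deV a.unpair.2 sc)).val := by
      unfold Fc; rw [if_pos ⟨h1, h2, h3⟩]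
    rw [hFc]
    have hMB2 : deM a.unpair.2 sc * a.unpair.2 * a.unpair.2 ≤ sc := deM_le
    have hchild : ∀ M' v' p', M' < deM a.unpair.2 sc → v' ≤ M' → p' < a.unpair.2 →
        ((List.range sc).map (Fc r Q hQB a)).getD (enc a.unpair.2 M' v' p') 0
          = (scanZ r Q hQB a.unpair.1 v' p' (M' - v')).val := by
      intro M' v' p' hh1 hh2 hh3
      have hv'B : v' < a.unpair.2 := by omega
      have hcode : enc a.unpair.2 M' v' p' < sc :=
        lt_of_lt_of_le (enc_lt_of_lt hh1 hv'B hh3) hMB2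
      rw [hget _ hcode]
      unfold Fc
      rw [deM_enc hv'B hh3, deV_enc hv'B hh3, deP_enc hh3,
        if_pos (show _ ∧ _ ∧ _ from ⟨h1, by omega, hh2⟩)]
    unfold stepK stepC1 stepC2
    rw [if_pos hval3, if_pos hval3]
    by_cases hv0 : deV a.unpair.2 sc = 0
    · rw [if_pos hv0, if_pos hv0,
        if_neg (show ¬((0 < a.unpair.2 ∧ _ ∧ _) ∧ ¬deV a.unpair.2 sc = 0 ∧ _ ∧ _) from
          fun h => h.2.1 hv0), hget0, hv0]
      simp only [Nat.sub_zero]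
      by_cases hr0 : deM a.unpair.2 sc = 0
      · rw [if_pos hr0, if_pos hr0, hget0, hr0, scanZ_zero]
        simp
      · rw [if_neg hr0, if_neg hr0]
        rw [scanZ_v0 r hQB a.unpair.1 (deP a.unpair.2 sc) (deM a.unpair.2 sc) hr0]
        have hpow : 2 ^ mu (deM a.unpair.2 sc) ≤ deM a.unpair.2 sc := pow_mu_le hr0
        have hpowpos : 0 < 2 ^ mu (deM a.unpair.2 sc) := Nat.pow_pos (by norm_num)
        have hmuB : mu (deM a.unpair.2 sc) < a.unpair.2 :=
          lt_of_le_of_lt (mu_le_self _) (by omega)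
        by_cases hu : Q (mu (deM a.unpair.2 sc)) (deP a.unpair.2 sc) a.unpair.1
            = 2 ^ mu (deM a.unpair.2 sc)
        · rw [if_pos hu, if_pos hu, if_pos hu]
          rw [hchild _ 0 _ (by omega) (Nat.zero_le _) hmuB, Nat.sub_zero]
          rw [hv1, Nat.add_zero]
        · rw [if_neg hu, if_neg hu, if_neg hu]
          have hqlt := hQB.lt (mu (deM a.unpair.2 sc)) (deP a.unpair.2 sc) a.unpair.1
          have hqle := hQB.le (mu (deM a.unpair.2 sc)) (deP a.unpair.2 sc) a.unpair.1
          have hp2 : (2:ℕ) ^ (mu (deM a.unpair.2 sc) + 1) = 2 * 2 ^ mu (deM a.unpair.2 sc) := by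
            ring
          rw [hchild _ _ _ (by omega) (by omega) hmuB]
          have hsub : Q (mu (deM a.unpair.2 sc)) (deP a.unpair.2 sc) a.unpair.1
                - 2 ^ mu (deM a.unpair.2 sc)
                + (deM a.unpair.2 sc - 2 ^ mu (deM a.unpair.2 sc))
                - (Q (mu (deM a.unpair.2 sc)) (deP a.unpair.2 sc) a.unpair.1
                  - 2 ^ mu (deM a.unpair.2 sc))
              = deM a.unpair.2 sc - 2 ^ mu (deM a.unpair.2 sc) := by omega
          rw [hsub, Nat.zero_add, Nat.add_zero, hvmod]
    · rw [if_neg hv0, if_neg hv0]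
      have hvne : deV a.unpair.2 sc ≠ 0 := hv0
      have hvpow : 2 ^ mu (deV a.unpair.2 sc) ≤ deV a.unpair.2 sc := pow_mu_le hvne
      have hvpowpos : 0 < 2 ^ mu (deV a.unpair.2 sc) := Nat.pow_pos (by norm_num)
      have hmuvB : mu (deV a.unpair.2 sc) < a.unpair.2 :=
        lt_of_le_of_lt (mu_le_self _) (by omega)
      by_cases hr0 : deM a.unpair.2 sc - deV a.unpair.2 sc = 0
      · rw [if_pos hr0, if_pos hr0,
          if_neg (show ¬(_ ∧ ¬deV a.unpair.2 sc = 0 ∧ ¬(deM a.unpair.2 sc -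
            deV a.unpair.2 sc = 0) ∧ _) from fun h => h.2.2.1 hr0), hget0, hr0]
        rw [scanZ_pend r hQB a.unpair.1 (deV a.unpair.2 sc) (deP a.unpair.2 sc) hvne]
        have hqlt := hQB.lt (mu (deV a.unpair.2 sc)) (deP a.unpair.2 sc) a.unpair.1
        have hqle := hQB.le (mu (deV a.unpair.2 sc)) (deP a.unpair.2 sc) a.unpair.1
        have hp2 : (2:ℕ) ^ (mu (deV a.unpair.2 sc) + 1) = 2 * 2 ^ mu (deV a.unpair.2 sc) := by
          ring
        by_cases hvm : deV a.unpair.2 sc = 2 ^ mu (deV a.unpair.2 sc)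
        · rw [if_pos hvm, if_pos hvm, if_pos hvm]
          have e1 : ∀ X : ZMod r, 1 + X - 1 = X := by intro X; ring
          rw [e1]
          rw [hchild _ 0 _ (by omega) (Nat.zero_le _) hmuvB, Nat.sub_zero]
          rw [Nat.zero_add, Nat.add_zero, hvmod]
        · rw [if_neg hvm, if_neg hvm, if_neg hvm]
          rw [hchild _ _ _ (by omega) (by omega) hmuvB]
          have hsub : Q (mu (deV a.unpair.2 sc)) (deP a.unpair.2 sc) a.unpair.1
                - 2 ^ mu (deV a.unpair.2 sc)
                + (deV a.unpair.2 sc - 2 ^ mu (deV a.unpair.2 sc))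
                - (deV a.unpair.2 sc - 2 ^ mu (deV a.unpair.2 sc))
              = Q (mu (deV a.unpair.2 sc)) (deP a.unpair.2 sc) a.unpair.1
                - 2 ^ mu (deV a.unpair.2 sc) := by omega
          rw [hsub, hvsub, Nat.add_zero, Nat.add_comm]
      · rw [if_neg hr0, if_neg hr0]
        have hrne : deM a.unpair.2 sc - deV a.unpair.2 sc ≠ 0 := hr0
        have hrpow : 2 ^ mu (deM a.unpair.2 sc - deV a.unpair.2 sc)
            ≤ deM a.unpair.2 sc - deV a.unpair.2 sc := pow_mu_le hrne
        have hrpowpos : 0 < 2 ^ mu (deM a.unpair.2 sc - deV a.unpair.2 sc) :=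
          Nat.pow_pos (by norm_num)
        have hmurB : mu (deM a.unpair.2 sc - deV a.unpair.2 sc) < a.unpair.2 :=
          lt_of_le_of_lt (mu_le_self _) (by omega)
        by_cases hjm : mu (deM a.unpair.2 sc - deV a.unpair.2 sc) = mu (deV a.unpair.2 sc)
        · rw [if_pos hjm, if_pos hjm,
            if_neg (show ¬(_ ∧ ¬deV a.unpair.2 sc = 0 ∧ ¬(deM a.unpair.2 sc -
              deV a.unpair.2 sc = 0) ∧ ¬(mu (deM a.unpair.2 sc - deV a.unpair.2 sc)
                = mu (deV a.unpair.2 sc))) from fun h => h.2.2.2 hjm), hget0]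
          rw [scanZ_match r hQB a.unpair.1 (deV a.unpair.2 sc) (deP a.unpair.2 sc)
            (deM a.unpair.2 sc - deV a.unpair.2 sc) hvne hrne hjm]
          by_cases hvm : deV a.unpair.2 sc = 2 ^ mu (deV a.unpair.2 sc)
          · rw [if_pos hvm, if_pos hvm, if_pos hvm]
            rw [hchild _ 0 _ (by omega) (Nat.zero_le _) hmuvB, Nat.sub_zero]
            rw [hv1, Nat.add_zero]
          · rw [if_neg hvm, if_neg hvm, if_neg hvm]
            rw [hchild _ _ _ (by omega) (by omega) hmuvB]
            have hsub : deV a.unpair.2 sc - 2 ^ mu (deV a.unpair.2 sc)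
                  + (deM a.unpair.2 sc - deV a.unpair.2 sc
                    - 2 ^ mu (deM a.unpair.2 sc - deV a.unpair.2 sc))
                  - (deV a.unpair.2 sc - 2 ^ mu (deV a.unpair.2 sc))
                = deM a.unpair.2 sc - deV a.unpair.2 sc
                    - 2 ^ mu (deM a.unpair.2 sc - deV a.unpair.2 sc) := by omega
            rw [hsub, Nat.zero_add, Nat.add_zero, hvmod]
        · rw [if_neg hjm, if_neg hjm,
            if_pos (show (0 < a.unpair.2 ∧ _ ∧ _) ∧ ¬deV a.unpair.2 sc = 0 ∧
              ¬(deM a.unpair.2 sc - deV a.unpair.2 sc = 0) ∧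
              ¬(mu (deM a.unpair.2 sc - deV a.unpair.2 sc) = mu (deV a.unpair.2 sc)) from
              ⟨hval3, hv0, hr0, hjm⟩)]
          rw [scanZ_abandon r hQB a.unpair.1 (deV a.unpair.2 sc) (deP a.unpair.2 sc)
            (deM a.unpair.2 sc - deV a.unpair.2 sc) hvne hrne hjm]
          have hpB : deP a.unpair.2 sc < a.unpair.2 := deP_lt h1
          rw [hchild _ _ _ (by omega) (le_refl _) hpB, Nat.sub_self]
          rw [hchild _ 0 _ (by omega) (Nat.zero_le _) hpB, Nat.sub_zero]
          rw [ZMod.val_add, Nat.zero_add]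

theorem gfun_spec (r : ℕ) (Q : ℕ → ℕ → ℕ → ℕ) (hr : 1 < r) (hQB : QOK Q) (a sc : ℕ) :
    gfun r Q a ((List.range sc).map (Fc r Q hQB a)) = some (Fc r Q hQB a sc) :=
  gfun_spec' r Q hr hQB a sc

theorem computable_val (r : ℕ) (Q : ℕ → ℕ → ℕ → ℕ) (hr : 1 < r)
    (hQ : Computable (fun p : ℕ × ℕ × ℕ => Q p.1 p.2.1 p.2.2)) (hQB : QOK Q) :
    Computable (fun w => (scanZ r Q hQB (mu w) 0 (mu w) (w % 2 ^ mu w)).val) := by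
  have hF := Computable.nat_strong_rec (Fc r Q hQB) (computable_gfun r Q hQ)
    (gfun_spec r Q hr hQB)
  have hmw : Primrec (fun w : ℕ => w % 2 ^ mu w) :=
    Primrec.nat_mod.comp Primrec.id (ppow.comp (Primrec.const 2) primrec_mu)
  have hBw : Primrec (fun w : ℕ => w + mu w + 2) :=
    Primrec.nat_add.comp (Primrec.nat_add.comp Primrec.id primrec_mu) (Primrec.const 2)
  have hb1 : Primrec (fun w : ℕ => Nat.pair (mu w) (w + mu w + 2)) :=
    Primrec₂.natPair.comp primrec_mu hBw
  have hb2 : Primrec (fun w : ℕ => enc (w + mu w + 2) (w % 2 ^ mu w) 0 (mu w)) :=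
    primrec_enc hBw hmw (Primrec.const 0) primrec_mu
  have hcomp := hF.comp hb1.to_comp hb2.to_comp
  apply hcomp.of_eq
  intro w
  have hB0 : (0:ℕ) < w + mu w + 2 := by omega
  have hmuB : mu w < w + mu w + 2 := by omega
  have h0B : (0:ℕ) < w + mu w + 2 := hB0
  have hMlt : w % 2 ^ mu w < w + mu w + 2 := by
    have := Nat.mod_le w (2 ^ mu w); omega
  unfold Fc
  rw [Nat.unpair_pair]
  simp only
  rw [deM_enc (by omega) hmuB, deV_enc (by omega) hmuB, deP_enc hmuB]
  rw [if_pos ⟨hB0, hMlt, Nat.zero_le _⟩, Nat.sub_zero]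

theorem stmt8 (Q : ℕ → ℕ → ℕ → ℕ)
    (hQ : Computable (fun p : ℕ × ℕ × ℕ => Q p.1 p.2.1 p.2.2))
    (hQB : ∀ n k s, Q n k s ∈ Bset n) (r : ℕ) (hr : 1 < r) :
    ∃ c : ℕ → ZMod r, Computable (fun w => (c w).val) ∧
      ∀ w : ℕ, 0 < w → ∀ n < lam w, c (w + Q n (lam w) (mu w)) = c w + 1 := by
  have hQB' : QOK Q := fun n k s => hQB n k s
  refine ⟨fun x => scanZ r Q hQB' (mu x) 0 (mu x) (x % 2 ^ mu x), ?_, ?_⟩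
  · exact computable_val r Q hr hQ hQB'
  · intro w hw n hn
    show scanZ r Q hQB' (mu (w + Q n (lam w) (mu w))) 0 (mu (w + Q n (lam w) (mu w)))
        ((w + Q n (lam w) (mu w)) % 2 ^ mu (w + Q n (lam w) (mu w))) = _
    rw [mu_edge (Q := Q) hQB' w hw n hn]
    exact c_edge r hQB' w hw n hn
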